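/- arXiv:2310.00232 — 4 statements merged into one kernel-verified Lean document; each statement's English description precedes it below -/
import Mathlib

section
/- For every real number x > -1, it holds that (1+x)·log(1+x) − x ≥ (1/2)·x²/(1 + x/3). -/
open Real Set

private noncomputable def pinskerH (y : ℝ) : ℝ :=
  Real.log (1 + y) - (3 / 2) * y * (y + 6) / (3 + y) ^ 2

private noncomputable def pinskerF (y : ℝ) : ℝ :=
  (1 + y) * Real.log (1 + y) - y - (3 / 2) * y ^ 2 / (3 + y)

private lemma pinskerH_hasDeriv (x : ℝ) (hx : -1 < x) :
    HasDerivAt pinskerH (1 / (1 + x) - 27 / (3 + x) ^ 3) x := by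
  have h1 : (1 : ℝ) + x ≠ 0 := by linarith
  have h3 : (3 : ℝ) + x ≠ 0 := by linarith
  have d1 : HasDerivAt (fun y : ℝ => Real.log (1 + y)) (1 / (1 + x)) x := by
    have := (Real.hasDerivAt_log h1).comp x ((hasDerivAt_id x).const_add 1)
    simpa [one_div, Function.comp_def] using this
  have dn : HasDerivAt (fun y : ℝ => (3 / 2) * y * (y + 6)) ((3 / 2) * (2 * x + 6)) x := by
    have := (((hasDerivAt_id x).const_mul (3 / 2 : ℝ)).mul ((hasDerivAt_id x).add_const 6))
    refine this.congr_deriv ?_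
    simp only [id_eq]
    ring
  have dd : HasDerivAt (fun y : ℝ => (3 + y) ^ 2) (2 * (3 + x)) x := by
    have := ((hasDerivAt_id x).const_add 3).pow 2
    refine this.congr_deriv ?_
    simp only [id_eq]
    push_cast
    ring
  have d2 : HasDerivAt (fun y : ℝ => (3 / 2) * y * (y + 6) / (3 + y) ^ 2)
      (27 / (3 + x) ^ 3) x := by
    have := dn.div dd (pow_ne_zero 2 h3)
    refine this.congr_deriv ?_
    field_simp
    ring
  exact d1.sub d2

private lemma pinskerH_mono : MonotoneOn pinskerH (Ioi (-1 : ℝ)) := by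
  apply monotoneOn_of_deriv_nonneg (convex_Ioi _)
  · exact fun x hx => ((pinskerH_hasDeriv x hx).differentiableAt).continuousAt.continuousWithinAt
  · intro x hx
    rw [interior_Ioi] at hx
    exact ((pinskerH_hasDeriv x hx).differentiableAt).differentiableWithinAt
  · intro x hx
    rw [interior_Ioi] at hx
    have hx' : -1 < x := hx
    rw [(pinskerH_hasDeriv x hx').deriv]
    have h1 : (0 : ℝ) < 1 + x := by linarith
    have h3 : (0 : ℝ) < 3 + x := by linarith
    have h3c : (0 : ℝ) < (3 + x) ^ 3 := by positivity
    rw [sub_nonneg, div_le_div_iff₀ h3c h1]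
    nlinarith [sq_nonneg x, sq_nonneg (x * (3 + x))]

private lemma pinskerH_zero : pinskerH 0 = 0 := by
  simp [pinskerH]

private lemma pinskerF_hasDeriv (x : ℝ) (hx : -1 < x) :
    HasDerivAt pinskerF (pinskerH x) x := by
  have h1 : (1 : ℝ) + x ≠ 0 := by linarith
  have h3 : (3 : ℝ) + x ≠ 0 := by linarith
  have dlog : HasDerivAt (fun y : ℝ => Real.log (1 + y)) (1 / (1 + x)) x := by
    have := (Real.hasDerivAt_log h1).comp x ((hasDerivAt_id x).const_add 1)
    simpa [one_div, Function.comp_def] using this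
  have dprod : HasDerivAt (fun y : ℝ => (1 + y) * Real.log (1 + y))
      (1 * Real.log (1 + x) + (1 + x) * (1 / (1 + x))) x :=
    ((hasDerivAt_id x).const_add 1).mul dlog
  have dn : HasDerivAt (fun y : ℝ => (3 / 2) * y ^ 2) ((3 / 2) * (2 * x)) x := by
    have := ((hasDerivAt_pow 2 x)).const_mul (3 / 2 : ℝ)
    refine this.congr_deriv ?_
    ring
  have dd : HasDerivAt (fun y : ℝ => 3 + y) 1 x := (hasDerivAt_id x).const_add 3
  have dq : HasDerivAt (fun y : ℝ => (3 / 2) * y ^ 2 / (3 + y))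
      (((3 / 2) * (2 * x) * (3 + x) - (3 / 2) * x ^ 2 * 1) / (3 + x) ^ 2) x :=
    dn.div dd h3
  have := (dprod.sub (hasDerivAt_id x)).sub dq
  refine this.congr_deriv ?_
  unfold pinskerH
  field_simp
  ring

theorem pinsker_aux (x : ℝ) (hx : x > -1) :
    (1 + x) * Real.log (1 + x) - x ≥ (1 / 2) * x ^ 2 / (1 + x / 3) := by
  have h3 : (0 : ℝ) < 3 + x := by linarith
  have key : pinskerF x ≥ 0 := by
    rcases le_or_gt 0 x with hx0 | hx0
    · -- x ≥ 0 : f monotone on [0, x] since h ≥ 0 there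
      have hmono : MonotoneOn pinskerF (Icc (0 : ℝ) x) := by
        apply monotoneOn_of_deriv_nonneg (convex_Icc _ _)
        · intro y hy
          have hy1 : -1 < y := by linarith [hy.1]
          exact ((pinskerF_hasDeriv y hy1).differentiableAt).continuousAt.continuousWithinAt
        · intro y hy
          rw [interior_Icc] at hy
          have hy1 : -1 < y := by linarith [hy.1]
          exact ((pinskerF_hasDeriv y hy1).differentiableAt).differentiableWithinAt
        · intro y hy
          rw [interior_Icc] at hy
          have hy1 : -1 < y := by linarith [hy.1]
          rw [(pinskerF_hasDeriv y hy1).deriv]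
          have : pinskerH 0 ≤ pinskerH y := by
            apply pinskerH_mono (by norm_num : (0:ℝ) ∈ Ioi (-1:ℝ)) (by exact hy1) (le_of_lt hy.1)
          rw [pinskerH_zero] at this
          exact this
      have hF0 : pinskerF 0 = 0 := by simp [pinskerF]
      have := hmono (left_mem_Icc.mpr hx0) (right_mem_Icc.mpr hx0) hx0
      rw [hF0] at this
      exact this
    · -- x < 0 : f antitone on [x, 0]
      have hanti : AntitoneOn pinskerF (Icc x (0 : ℝ)) := by
        apply antitoneOn_of_deriv_nonpos (convex_Icc _ _)
        · intro y hy
          have hy1 : -1 < y := by linarith [hy.1]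
          exact ((pinskerF_hasDeriv y hy1).differentiableAt).continuousAt.continuousWithinAt
        · intro y hy
          rw [interior_Icc] at hy
          have hy1 : -1 < y := by linarith [hy.1]
          exact ((pinskerF_hasDeriv y hy1).differentiableAt).differentiableWithinAt
        · intro y hy
          rw [interior_Icc] at hy
          have hy1 : -1 < y := by linarith [hy.1]
          rw [(pinskerF_hasDeriv y hy1).deriv]
          have : pinskerH y ≤ pinskerH 0 := by
            apply pinskerH_mono (by exact hy1) (by norm_num : (0:ℝ) ∈ Ioi (-1:ℝ)) (le_of_lt hy.2)
          rw [pinskerH_zero] at this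
          exact this
      have hF0 : pinskerF 0 = 0 := by simp [pinskerF]
      have hx0' : x ≤ 0 := le_of_lt hx0
      have := hanti (left_mem_Icc.mpr hx0') (right_mem_Icc.mpr hx0') hx0'
      rw [hF0] at this
      exact this
  have heq : (1 / 2) * x ^ 2 / (1 + x / 3) = (3 / 2) * x ^ 2 / (3 + x) := by
    have : (1 : ℝ) + x / 3 ≠ 0 := by intro h; linarith
    field_simp
  rw [ge_iff_le, heq]
  unfold pinskerF at key
  linarith
end

section
/- Let R be a nonnegative real-valued random variable with E[R] = 1. Then (E|R−1|)² ≤ 2·E[R·log R] (with the convention 0·log 0 = 0). -/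
open MeasureTheory

private lemma g_mono : MonotoneOn (fun x : ℝ => (x + 1) * Real.log x - 2 * (x - 1))
    (Set.Ioi (0:ℝ)) := by
  have hderiv : ∀ y : ℝ, y ≠ 0 → HasDerivAt (fun x : ℝ => (x + 1) * Real.log x - 2 * (x - 1))
      (1 * Real.log y + (y + 1) * y⁻¹ - 2 * 1) y := fun y hy =>
    (((hasDerivAt_id y).add_const 1).mul (Real.hasDerivAt_log hy)).sub
      (((hasDerivAt_id y).sub_const 1).const_mul 2)
  apply monotoneOn_of_deriv_nonneg (convex_Ioi 0)
  · apply ContinuousOn.sub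
    · exact ContinuousOn.mul (by fun_prop) (Real.continuousOn_log.mono (by
        intro x hx; exact ne_of_gt hx))
    · fun_prop
  · intro x hx
    rw [interior_Ioi] at hx
    exact (hderiv x (ne_of_gt hx)).differentiableAt.differentiableWithinAt
  · intro x hx
    rw [interior_Ioi] at hx
    rw [(hderiv x (ne_of_gt hx)).deriv]
    have hlog : 1 - x⁻¹ ≤ Real.log x := Real.one_sub_inv_le_log_of_pos hx
    have hxi : (x + 1) * x⁻¹ = 1 + x⁻¹ := by rw [add_mul, mul_inv_cancel₀ (ne_of_gt hx), one_mul, add_comm]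
    rw [hxi]; linarith

private lemma g_nonneg {x : ℝ} (hx : 1 ≤ x) : 0 ≤ (x + 1) * Real.log x - 2 * (x - 1) := by
  have h := g_mono (Set.mem_Ioi.mpr one_pos) (Set.mem_Ioi.mpr (lt_of_lt_of_le one_pos hx)) hx
  simpa using h

private lemma g_nonpos {x : ℝ} (hx0 : 0 < x) (hx : x ≤ 1) :
    (x + 1) * Real.log x - 2 * (x - 1) ≤ 0 := by
  have h := g_mono (Set.mem_Ioi.mpr hx0) (Set.mem_Ioi.mpr one_pos) hx
  simpa using h

private lemma phi_hasDerivAt {y : ℝ} (hy : y ≠ 0) :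
    HasDerivAt (fun x : ℝ => 2 * (x + 2) * (x * Real.log x - x + 1) - 3 * (x - 1) ^ 2)
      (2 * 1 * (y * Real.log y - y + 1) + 2 * (y + 2) * (Real.log y + 1 - 1)
        - 3 * (↑2 * (y - 1) ^ 1 * 1)) y := by
  have h1 : HasDerivAt (fun z : ℝ => z * Real.log z - z + 1) (Real.log y + 1 - 1) y :=
    ((Real.hasDerivAt_mul_log hy).sub (hasDerivAt_id y)).add_const 1
  have h3 : HasDerivAt (fun z : ℝ => 2 * (z + 2)) (2 * 1) y :=
    ((hasDerivAt_id y).add_const 2).const_mul 2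
  exact (h3.mul h1).sub ((((hasDerivAt_id y).sub_const 1).pow 2).const_mul 3)

private lemma phi_cont : Continuous
    (fun x : ℝ => 2 * (x + 2) * (x * Real.log x - x + 1) - 3 * (x - 1) ^ 2) := by
  apply Continuous.sub
  · exact (continuous_const.mul (by fun_prop)).mul
      ((Real.continuous_mul_log.sub continuous_id).add continuous_const)
  · fun_prop

/-- Key pointwise inequality: `3(x-1)^2 ≤ 2(x+2)(x log x - x + 1)` for `x ≥ 0`. -/
private lemma key_ineq {x : ℝ} (hx : 0 ≤ x) :
    3 * (x - 1) ^ 2 ≤ 2 * (x + 2) * (x * Real.log x - x + 1) := by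
  set φ : ℝ → ℝ := fun x => 2 * (x + 2) * (x * Real.log x - x + 1) - 3 * (x - 1) ^ 2 with hφdef
  suffices h : 0 ≤ φ x by
    simp only [hφdef] at h; linarith
  have hφ1 : φ 1 = 0 := by simp [hφdef]
  rcases le_or_gt x 1 with hx1 | hx1
  · -- φ antitone on [0,1]
    have hanti : AntitoneOn φ (Set.Icc (0:ℝ) 1) := by
      apply antitoneOn_of_deriv_nonpos (convex_Icc 0 1) phi_cont.continuousOn
      · intro y hy
        rw [interior_Icc] at hy
        exact (phi_hasDerivAt (ne_of_gt hy.1)).differentiableAt.differentiableWithinAt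
      · intro y hy
        rw [interior_Icc] at hy
        rw [(phi_hasDerivAt (ne_of_gt hy.1)).deriv]
        have hg := g_nonpos hy.1 hy.2.le
        nlinarith [hg]
    have := hanti (Set.mem_Icc.mpr ⟨hx, hx1⟩) (Set.mem_Icc.mpr ⟨zero_le_one, le_refl 1⟩) hx1
    rw [hφ1] at this; exact this
  · -- φ monotone on [1,∞)
    have hmono : MonotoneOn φ (Set.Ici (1:ℝ)) := by
      apply monotoneOn_of_deriv_nonneg (convex_Ici 1) phi_cont.continuousOn
      · intro y hy
        rw [interior_Ici] at hy
        exact (phi_hasDerivAt (ne_of_gt (lt_trans zero_lt_one hy))).differentiableAt.differentiableWithinAt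
      · intro y hy
        rw [interior_Ici] at hy
        rw [(phi_hasDerivAt (ne_of_gt (lt_trans zero_lt_one hy))).deriv]
        have hg := g_nonneg hy.le
        nlinarith [hg]
    have := hmono (Set.mem_Ici.mpr (le_refl 1)) (Set.mem_Ici.mpr hx1.le) hx1.le
    rw [hφ1] at this; exact this

private lemma ent_nonneg {x : ℝ} (hx : 0 ≤ x) : 0 ≤ x * Real.log x - x + 1 := by
  nlinarith [key_ineq hx, sq_nonneg (x - 1)]

theorem pinsker_type_inequality {Ω : Type*} [MeasurableSpace Ω]
    (μ : Measure Ω) [IsProbabilityMeasure μ] (R : Ω → ℝ)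
    (hint : Integrable R μ)
    (hpos : ∀ᵐ ω ∂μ, 0 ≤ R ω)
    (hmean : ∫ ω, R ω ∂μ = 1)
    (hent : Integrable (fun ω => R ω * Real.log (R ω)) μ) :
    (∫ ω, |R ω - 1| ∂μ) ^ 2 ≤ 2 * ∫ ω, R ω * Real.log (R ω) ∂μ := by
  set a : Ω → ℝ := fun ω => Real.sqrt ((2/3) * (R ω + 2)) with ha
  set b : Ω → ℝ := fun ω => Real.sqrt (R ω * Real.log (R ω) - R ω + 1) with hb
  have hRm : AEStronglyMeasurable R μ := hint.1
  have ham : AEStronglyMeasurable a μ :=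
    Real.continuous_sqrt.comp_aestronglyMeasurable
      ((hRm.add aestronglyMeasurable_const).const_mul (2/3))
  have hbm : AEStronglyMeasurable b μ :=
    Real.continuous_sqrt.comp_aestronglyMeasurable
      ((hent.1.sub hRm).add aestronglyMeasurable_const)
  -- squares
  have ha_sq : (fun ω => a ω ^ 2) =ᵐ[μ] fun ω => (2/3) * (R ω + 2) := by
    filter_upwards [hpos] with ω hω
    rw [ha]; exact Real.sq_sqrt (by linarith)
  have hb_sq : (fun ω => b ω ^ 2) =ᵐ[μ] fun ω => R ω * Real.log (R ω) - R ω + 1 := by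
    filter_upwards [hpos] with ω hω
    rw [hb]; exact Real.sq_sqrt (ent_nonneg hω)
  have hia : Integrable (fun ω => a ω ^ 2) μ :=
    (((hint.add (integrable_const 2)).const_mul (2/3)).congr ha_sq.symm)
  have hib : Integrable (fun ω => b ω ^ 2) μ :=
    (((hent.sub hint).add (integrable_const 1)).congr hb_sq.symm)
  have ha2 : MemLp a 2 μ := (memLp_two_iff_integrable_sq ham).mpr hia
  have hb2 : MemLp b 2 μ := (memLp_two_iff_integrable_sq hbm).mpr hib
  -- pointwise bound
  have hab : ∀ᵐ ω ∂μ, |R ω - 1| ≤ a ω * b ω := by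
    filter_upwards [hpos] with ω hω
    have h1 : (R ω - 1) ^ 2 ≤ ((2/3) * (R ω + 2)) * (R ω * Real.log (R ω) - R ω + 1) := by
      nlinarith [key_ineq hω]
    calc |R ω - 1| = Real.sqrt ((R ω - 1) ^ 2) := (Real.sqrt_sq_eq_abs _).symm
      _ ≤ Real.sqrt (((2/3) * (R ω + 2)) * (R ω * Real.log (R ω) - R ω + 1)) :=
          Real.sqrt_le_sqrt h1
      _ = a ω * b ω := by rw [ha, hb, Real.sqrt_mul (by linarith)]
  -- integrability of product
  have hiab : Integrable (fun ω => a ω * b ω) μ := by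
    have h : MemLp (a • b) 1 μ := hb2.smul ha2
    rw [memLp_one_iff_integrable] at h
    exact h
  -- step 1
  have step1 : ∫ ω, |R ω - 1| ∂μ ≤ ∫ ω, a ω * b ω ∂μ :=
    integral_mono_ae (hint.sub (integrable_const 1)).abs hiab hab
  -- step 2 : Cauchy-Schwarz
  have hconj : Real.HolderConjugate 2 2 := Real.HolderConjugate.two_two
  have h2 : ENNReal.ofReal (2:ℝ) = 2 := by norm_num
  have step2 : ∫ ω, a ω * b ω ∂μ ≤
      (∫ ω, a ω ^ (2:ℝ) ∂μ) ^ ((1:ℝ)/2) * (∫ ω, b ω ^ (2:ℝ) ∂μ) ^ ((1:ℝ)/2) :=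
    integral_mul_le_Lp_mul_Lq_of_nonneg hconj
      (Filter.Eventually.of_forall fun ω => Real.sqrt_nonneg _)
      (Filter.Eventually.of_forall fun ω => Real.sqrt_nonneg _)
      (h2 ▸ ha2) (h2 ▸ hb2)
  -- compute the two integrals
  have hrpow : ∀ f : Ω → ℝ, (fun ω => (f ω) ^ (2:ℝ)) = fun ω => (f ω) ^ (2:ℕ) := by
    intro f; funext ω; rw [← Real.rpow_natCast (f ω) 2]; norm_num
  have hIa : ∫ ω, a ω ^ (2:ℝ) ∂μ = 2 := by
    rw [hrpow a]
    rw [integral_congr_ae ha_sq]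
    rw [integral_const_mul, integral_add hint (integrable_const 2), hmean, integral_const]
    simp
    norm_num
  have hIb : ∫ ω, b ω ^ (2:ℝ) ∂μ = ∫ ω, R ω * Real.log (R ω) ∂μ := by
    rw [hrpow b]
    have hsub : Integrable (fun ω => R ω * Real.log (R ω) - R ω) μ := hent.sub hint
    rw [integral_congr_ae hb_sq, integral_add hsub (integrable_const 1),
      integral_sub hent hint, hmean, integral_const]
    simp
  have hE : 0 ≤ ∫ ω, R ω * Real.log (R ω) ∂μ := by
    rw [← hIb, hrpow b]
    exact integral_nonneg fun ω => sq_nonneg _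
  set E := ∫ ω, R ω * Real.log (R ω) ∂μ
  have hL : 0 ≤ ∫ ω, |R ω - 1| ∂μ := integral_nonneg fun ω => abs_nonneg _
  have hfinal : ∫ ω, |R ω - 1| ∂μ ≤ Real.sqrt 2 * Real.sqrt E := by
    refine (step1.trans step2).trans_eq ?_
    rw [hIa, hIb, Real.sqrt_eq_rpow, Real.sqrt_eq_rpow]
  calc (∫ ω, |R ω - 1| ∂μ) ^ 2 ≤ (Real.sqrt 2 * Real.sqrt E) ^ 2 :=
        pow_le_pow_left₀ hL hfinal 2
    _ = 2 * E := by
        rw [mul_pow, Real.sq_sqrt (by norm_num : (0:ℝ) ≤ 2), Real.sq_sqrt hE]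
end

section
/- Let θ, c₂, α > 0 with θc₂ > α/2, and set η_k = θ/k, t_n = ∑_{k=1}^n η_k. Then there exists a constant C = C(θ, c₂, α) such that for all n ≥ 2: ∑_{k=1}^{⌊(n−1)/2⌋} e^{−c₂(t_n−t_k)} (t_n−t_k)^{−1/2} η_k^{1+α/2} ≤ C n^{−α/2}. -/
/-- `tpartial θ n = ∑_{k=1}^n θ/k`. -/
noncomputable def tpartial (θ : ℝ) (n : ℕ) : ℝ := ∑ k ∈ Finset.Icc 1 n, θ / k

lemma tpartial_sub (θ : ℝ) {k n : ℕ} (hkn : k ≤ n) :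
    tpartial θ n - tpartial θ k = ∑ j ∈ Finset.Ioc k n, θ / j := by
  have e : ∀ N : ℕ, Finset.Icc 1 N = Finset.Ioc 0 N := by
    intro N; ext x; simp [Finset.mem_Icc, Finset.mem_Ioc]; omega
  have h := Finset.sum_Ioc_consecutive (fun j : ℕ => θ / j) (Nat.zero_le k) hkn
  unfold tpartial
  rw [e, e]
  linarith [h]

lemma tpartial_log_lb (θ : ℝ) (hθ : 0 ≤ θ) {k n : ℕ} (hkn : k ≤ n) :
    θ * (Real.log ((n : ℝ) + 1) - Real.log ((k : ℝ) + 1)) ≤ tpartial θ n - tpartial θ k := by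
  rw [tpartial_sub θ hkn]
  induction n, hkn using Nat.le_induction with
  | base => simp
  | succ n hkn ih =>
    rw [Finset.sum_Ioc_succ_top hkn]
    have hx : (0:ℝ) < (n:ℝ) + 1 := by positivity
    have hlog : Real.log ((n:ℝ) + 1 + 1) - Real.log ((n:ℝ) + 1) ≤ 1 / ((n:ℝ) + 1) := by
      rw [← Real.log_div (by positivity) hx.ne']
      have h1 := Real.log_le_sub_one_of_pos
        (show (0:ℝ) < ((n:ℝ) + 1 + 1) / ((n:ℝ) + 1) by positivity)
      have heq : ((n:ℝ) + 1 + 1) / ((n:ℝ) + 1) - 1 = 1 / ((n:ℝ) + 1) := by field_simp; ring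
      linarith
    have h2 : θ * (Real.log ((n:ℝ) + 1 + 1) - Real.log ((n:ℝ) + 1)) ≤ θ / ((n:ℝ) + 1) := by
      calc θ * (Real.log ((n:ℝ) + 1 + 1) - Real.log ((n:ℝ) + 1))
          ≤ θ * (1 / ((n:ℝ) + 1)) := mul_le_mul_of_nonneg_left hlog hθ
        _ = θ / ((n:ℝ) + 1) := by ring
    push_cast
    rw [mul_sub] at *
    push_cast at ih h2 ⊢
    linarith

/-- Bernoulli-type bound: `(x+1)^(γ-1) ≤ ((x+1)^γ - x^γ)/γ` for `0 < γ ≤ 1`, `0 ≤ x`. -/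
lemma rpow_succ_bound {γ : ℝ} (hγ0 : 0 < γ) (hγ1 : γ ≤ 1) {x : ℝ} (hx : 0 ≤ x) :
    (x + 1) ^ (γ - 1) ≤ ((x + 1) ^ γ - x ^ γ) / γ := by
  have hxp : (0:ℝ) < x + 1 := by positivity
  have hpow : (0:ℝ) < (x + 1) ^ γ := Real.rpow_pos_of_pos hxp γ
  have hb : (x / (x + 1)) ^ γ ≤ 1 - γ * (1 / (x + 1)) := by
    have hs : (-1:ℝ) ≤ -(1 / (x + 1)) := by
      have h1 : 1 / (x + 1) ≤ 1 := by rw [div_le_one hxp]; linarith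
      linarith
    have hber := rpow_one_add_le_one_add_mul_self hs hγ0.le hγ1
    have he : 1 + -(1 / (x + 1)) = x / (x + 1) := by field_simp; ring
    rw [he] at hber
    linarith
  have hmul := mul_le_mul_of_nonneg_right hb hpow.le
  rw [Real.div_rpow hx hxp.le, div_mul_cancel₀ _ hpow.ne'] at hmul
  have he2 : (1 - γ * (1 / (x + 1))) * (x + 1) ^ γ = (x + 1) ^ γ - γ * (x + 1) ^ (γ - 1) := by
    rw [Real.rpow_sub hxp, Real.rpow_one]
    field_simp
  rw [he2] at hmul
  rw [le_div_iff₀ hγ0]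
  linarith

lemma sum_rpow_le {γ : ℝ} (hγ0 : 0 < γ) (hγ1 : γ ≤ 1) (m : ℕ) :
    ∑ k ∈ Finset.Icc 1 m, (k : ℝ) ^ (γ - 1) ≤ (m : ℝ) ^ γ / γ := by
  induction m with
  | zero =>
    simp [Real.zero_rpow hγ0.ne']
  | succ m ih =>
    rw [Finset.sum_Icc_succ_top (by omega : 1 ≤ m + 1)]
    have hb := rpow_succ_bound hγ0 hγ1 (show (0:ℝ) ≤ (m:ℝ) from Nat.cast_nonneg m)
    push_cast
    have : ((m:ℝ) + 1) ^ γ / γ - (m:ℝ) ^ γ / γ = (((m:ℝ) + 1) ^ γ - (m:ℝ) ^ γ) / γ := by ring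
    linarith

theorem tail_sum_bound (θ c₂ α : ℝ) (hθ : 0 < θ) (hc₂ : 0 < c₂) (hα : 0 < α)
    (hθc₂ : α / 2 < θ * c₂) :
    ∃ C : ℝ, 0 < C ∧ ∀ n : ℕ, 2 ≤ n →
      ∑ k ∈ Finset.Icc 1 ((n - 1) / 2),
          Real.exp (-c₂ * (tpartial θ n - tpartial θ k)) *
            (tpartial θ n - tpartial θ k) ^ (-(1 / 2) : ℝ) *
            (θ / k) ^ (1 + α / 2)
        ≤ C * (n : ℝ) ^ (-(α / 2)) := by
  set q : ℝ := θ * c₂ with hq_def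
  set p : ℝ := 1 + α / 2 with hp_def
  set β : ℝ := q - α / 2 with hβ_def
  set γ : ℝ := min β 1 with hγ_def
  have hβ0 : 0 < β := by simp only [hβ_def]; linarith
  have hγ0 : 0 < γ := lt_min hβ0 one_pos
  have hγ1 : γ ≤ 1 := min_le_right _ _
  have hγβ : γ ≤ β := min_le_left _ _
  have hq0 : 0 < q := mul_pos hθ hc₂
  have hδ : (0:ℝ) < θ * Real.log (4 / 3) :=
    mul_pos hθ (Real.log_pos (by norm_num))
  set B : ℝ := (θ * Real.log (4 / 3)) ^ (-(1 / 2) : ℝ) with hB_def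
  have hB0 : 0 < B := Real.rpow_pos_of_pos hδ _
  set K : ℝ := (2:ℝ) ^ q * θ ^ p * B with hK_def
  have hK0 : 0 < K := by
    have h2 : (0:ℝ) < (2:ℝ) ^ q := Real.rpow_pos_of_pos (by norm_num) q
    have h3 : (0:ℝ) < θ ^ p := Real.rpow_pos_of_pos hθ p
    positivity
  refine ⟨K / γ, by positivity, ?_⟩
  intro n hn
  set m : ℕ := (n - 1) / 2 with hm_def
  have hn0 : (0:ℝ) < (n:ℝ) := by positivity
  have hnn2 : (2:ℝ) ≤ (n:ℝ) := by exact_mod_cast hn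
  set cst : ℝ := K * ((n:ℝ) ^ (-q) * (n:ℝ) ^ (β - γ)) with hcst_def
  have hcst0 : 0 ≤ cst := by
    have h1 : (0:ℝ) < (n:ℝ) ^ (-q) := Real.rpow_pos_of_pos hn0 _
    have h2 : (0:ℝ) < (n:ℝ) ^ (β - γ) := Real.rpow_pos_of_pos hn0 _
    positivity
  have key : ∀ k ∈ Finset.Icc 1 m,
      Real.exp (-c₂ * (tpartial θ n - tpartial θ k)) *
          (tpartial θ n - tpartial θ k) ^ (-(1 / 2) : ℝ) *
          (θ / k) ^ (1 + α / 2)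
        ≤ cst * (k : ℝ) ^ (γ - 1) := by
    intro k hk
    rw [Finset.mem_Icc] at hk
    obtain ⟨hk1, hkm⟩ := hk
    have hkn : k ≤ n := by omega
    have h4 : 4 * (k + 1) ≤ 3 * n := by omega
    set x : ℝ := (k:ℝ) with hx_def
    have hx1 : (1:ℝ) ≤ x := by rw [hx_def]; exact_mod_cast hk1
    have hx0 : (0:ℝ) < x := by linarith
    have hxn : x ≤ (n:ℝ) := by rw [hx_def]; exact_mod_cast hkn
    set Δ : ℝ := tpartial θ n - tpartial θ k with hΔ_def
    -- lower bound for Δ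
    have hΔ1 : θ * (Real.log (n:ℝ) - Real.log (x + 1)) ≤ Δ := by
      have h1 := tpartial_log_lb θ hθ.le hkn
      have h2 : Real.log (n:ℝ) ≤ Real.log ((n:ℝ) + 1) :=
        Real.log_le_log hn0 (by linarith)
      have h3 : θ * (Real.log (n:ℝ) - Real.log (x + 1)) ≤
          θ * (Real.log ((n:ℝ) + 1) - Real.log (x + 1)) := by
        apply mul_le_mul_of_nonneg_left _ hθ.le
        linarith
      exact h3.trans h1
    have hlog43 : Real.log (4 / 3 : ℝ) ≤ Real.log (n:ℝ) - Real.log (x + 1) := by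
      rw [← Real.log_div hn0.ne' (by positivity : (x + 1) ≠ 0)]
      apply Real.log_le_log (by norm_num)
      rw [le_div_iff₀ (by positivity)]
      have h4' : 4 * (x + 1) ≤ 3 * (n:ℝ) := by rw [hx_def]; exact_mod_cast h4
      linarith
    have hδΔ : θ * Real.log (4 / 3) ≤ Δ := by
      have := mul_le_mul_of_nonneg_left hlog43 hθ.le
      linarith
    -- bound the rpow factor
    have hD : Δ ^ (-(1 / 2) : ℝ) ≤ B :=
      Real.rpow_le_rpow_of_nonpos hδ hδΔ (by norm_num)
    -- bound the exponential factor
    have hE : Real.exp (-c₂ * Δ) ≤ (2:ℝ) ^ q * x ^ q / (n:ℝ) ^ q := by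
      have h1 : -c₂ * Δ ≤ Real.log ((x + 1) / (n:ℝ)) * q := by
        rw [Real.log_div (by positivity) hn0.ne']
        have h2 := mul_le_mul_of_nonneg_left hΔ1 hc₂.le
        rw [mul_sub] at h2 ⊢
        nlinarith [h2]
      have h2 : Real.exp (-c₂ * Δ) ≤ ((x + 1) / (n:ℝ)) ^ q := by
        rw [Real.rpow_def_of_pos (by positivity : (0:ℝ) < (x + 1) / (n:ℝ))]
        exact Real.exp_le_exp.mpr h1
      have h3 : ((x + 1) / (n:ℝ)) ^ q ≤ (2 * x / (n:ℝ)) ^ q := by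
        apply Real.rpow_le_rpow (by positivity) _ hq0.le
        gcongr
        linarith
      have h4 : (2 * x / (n:ℝ)) ^ q = (2:ℝ) ^ q * x ^ q / (n:ℝ) ^ q := by
        rw [Real.div_rpow (by positivity) hn0.le, Real.mul_rpow (by norm_num) hx0.le]
      calc Real.exp (-c₂ * Δ) ≤ ((x + 1) / (n:ℝ)) ^ q := h2
        _ ≤ (2 * x / (n:ℝ)) ^ q := h3
        _ = (2:ℝ) ^ q * x ^ q / (n:ℝ) ^ q := h4
    have hPeq : (θ / x) ^ p = θ ^ p / x ^ p := Real.div_rpow hθ.le hx0.le p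
    have hD0 : 0 ≤ Δ ^ (-(1 / 2) : ℝ) := Real.rpow_nonneg (le_trans hδ.le hδΔ) _
    have hP0 : 0 ≤ (θ / x) ^ p := Real.rpow_nonneg (by positivity) _
    have hE0 : 0 ≤ Real.exp (-c₂ * Δ) := (Real.exp_pos _).le
    -- chain of bounds
    have step1 : Real.exp (-c₂ * Δ) * Δ ^ (-(1 / 2) : ℝ) * (θ / x) ^ p
        ≤ ((2:ℝ) ^ q * x ^ q / (n:ℝ) ^ q) * B * (θ ^ p / x ^ p) := by
      rw [hPeq]
      have h1 : Real.exp (-c₂ * Δ) * Δ ^ (-(1 / 2) : ℝ)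
          ≤ ((2:ℝ) ^ q * x ^ q / (n:ℝ) ^ q) * B := by
        apply mul_le_mul hE hD hD0
        positivity
      apply mul_le_mul_of_nonneg_right h1
      positivity
    have hxq : (0:ℝ) < x ^ q := Real.rpow_pos_of_pos hx0 _
    have hxp' : (0:ℝ) < x ^ p := Real.rpow_pos_of_pos hx0 _
    have hnq : (0:ℝ) < (n:ℝ) ^ q := Real.rpow_pos_of_pos hn0 _
    have step2 : ((2:ℝ) ^ q * x ^ q / (n:ℝ) ^ q) * B * (θ ^ p / x ^ p)
        = K * ((n:ℝ) ^ (-q) * x ^ (q - p)) := by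
      rw [hK_def, Real.rpow_sub hx0, Real.rpow_neg hn0.le]
      field_simp
    have hqp : q - p = (β - γ) + (γ - 1) := by
      simp only [hβ_def, hp_def]
      ring
    have step3 : x ^ (q - p) = x ^ (β - γ) * x ^ (γ - 1) := by
      rw [hqp, Real.rpow_add hx0]
    have step4 : x ^ (β - γ) ≤ (n:ℝ) ^ (β - γ) :=
      Real.rpow_le_rpow hx0.le hxn (by linarith)
    calc Real.exp (-c₂ * Δ) * Δ ^ (-(1 / 2) : ℝ) * (θ / x) ^ p
        ≤ ((2:ℝ) ^ q * x ^ q / (n:ℝ) ^ q) * B * (θ ^ p / x ^ p) := step1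
      _ = K * ((n:ℝ) ^ (-q) * (x ^ (β - γ) * x ^ (γ - 1))) := by rw [step2, step3]
      _ ≤ K * ((n:ℝ) ^ (-q) * ((n:ℝ) ^ (β - γ) * x ^ (γ - 1))) := by
          have hnq' : (0:ℝ) ≤ (n:ℝ) ^ (-q) := (Real.rpow_pos_of_pos hn0 _).le
          have hxg : (0:ℝ) ≤ x ^ (γ - 1) := (Real.rpow_pos_of_pos hx0 _).le
          apply mul_le_mul_of_nonneg_left _ hK0.le
          apply mul_le_mul_of_nonneg_left _ hnq'
          exact mul_le_mul_of_nonneg_right step4 hxg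
      _ = cst * x ^ (γ - 1) := by rw [hcst_def]; ring
  have hmn : (m:ℝ) ≤ (n:ℝ) := by
    have : m ≤ n := by omega
    exact_mod_cast this
  have hexps : (n:ℝ) ^ (-q) * (n:ℝ) ^ (β - γ) * (n:ℝ) ^ γ = (n:ℝ) ^ (-(α / 2)) := by
    rw [← Real.rpow_add hn0, ← Real.rpow_add hn0]
    congr 1
    simp only [hβ_def]
    ring
  calc ∑ k ∈ Finset.Icc 1 m,
        Real.exp (-c₂ * (tpartial θ n - tpartial θ k)) *
          (tpartial θ n - tpartial θ k) ^ (-(1 / 2) : ℝ) *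
          (θ / k) ^ (1 + α / 2)
      ≤ ∑ k ∈ Finset.Icc 1 m, cst * (k : ℝ) ^ (γ - 1) := Finset.sum_le_sum key
    _ = cst * ∑ k ∈ Finset.Icc 1 m, (k : ℝ) ^ (γ - 1) := by rw [Finset.mul_sum]
    _ ≤ cst * ((m:ℝ) ^ γ / γ) :=
        mul_le_mul_of_nonneg_left (sum_rpow_le hγ0 hγ1 m) hcst0
    _ ≤ cst * ((n:ℝ) ^ γ / γ) := by
        apply mul_le_mul_of_nonneg_left _ hcst0
        gcongr
    _ = K / γ * (n:ℝ) ^ (-(α / 2)) := by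
        rw [hcst_def, ← hexps]
        ring
end

section
/- Let θ > 0, λ > 0, β > 0 with λθ ≠ β, η_k = θ/k, t_n = ∑_{k=1}^n η_k. Then there exists C = C(θ, λ, β) such that for all n ≥ 1: ∑_{k=1}^n η_k^{1+β} e^{−λ(t_n − t_k)} ≤ C n^{−(λθ ∧ β)}. -/
open Finset Real

noncomputable def Hsum (n : ℕ) : ℝ := ∑ k ∈ Finset.Icc 1 n, (1 : ℝ) / k

lemma Hsum_succ (n : ℕ) : Hsum (n + 1) = Hsum n + 1 / ((n : ℝ) + 1) := by
  have : (1:ℕ) ≤ n + 1 := Nat.le_add_left 1 n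
  rw [Hsum, Finset.sum_Icc_succ_top this]
  push_cast
  rfl

lemma Hsum_g_mono : Monotone (fun n : ℕ => Hsum n - Real.log ((n : ℝ) + 1)) := by
  apply monotone_nat_of_le_succ
  intro n
  have h1 : (0:ℝ) < (n:ℝ) + 1 := by positivity
  have h2 : (0:ℝ) < (n:ℝ) + 2 := by positivity
  have hlog : Real.log ((n:ℝ) + 2) - Real.log ((n:ℝ) + 1) ≤ 1 / ((n:ℝ) + 1) := by
    have := Real.log_le_sub_one_of_pos (x := ((n:ℝ) + 2) / ((n:ℝ) + 1)) (by positivity)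
    rw [Real.log_div h2.ne' h1.ne'] at this
    have hx : ((n:ℝ) + 2) / ((n:ℝ) + 1) - 1 = 1 / ((n:ℝ) + 1) := by
      field_simp
      norm_num
    linarith [hx ▸ this]
  have hs := Hsum_succ n
  push_cast
  rw [show ((n:ℝ) + 1 + 1) = (n:ℝ) + 2 by ring]
  linarith

lemma log_sub_le_Hsum_sub {k n : ℕ} (h : k ≤ n) :
    Real.log ((n : ℝ) + 1) - Real.log ((k : ℝ) + 1) ≤ Hsum n - Hsum k := by
  have := Hsum_g_mono h
  simp only at this
  linarith

lemma tpartial_eq (θ : ℝ) (n : ℕ) : tpartial θ n = θ * Hsum n := by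
  rw [tpartial, Hsum, Finset.mul_sum]
  refine Finset.sum_congr rfl fun k _ => ?_
  rw [mul_one_div]

lemma exp_bound (θ lam : ℝ) (hθ : 0 < θ) (hlam : 0 < lam) {k n : ℕ}
    (hk : 1 ≤ k) (hkn : k ≤ n) :
    Real.exp (-lam * (tpartial θ n - tpartial θ k)) ≤
      (2 : ℝ) ^ (lam * θ) * ((k : ℝ) / n) ^ (lam * θ) := by
  have hk0 : (0:ℝ) < k := by exact_mod_cast hk
  have hn0 : (0:ℝ) < n := lt_of_lt_of_le hk0 (by exact_mod_cast hkn)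
  have h1 : Real.exp (-lam * (tpartial θ n - tpartial θ k)) ≤
      Real.exp (-(lam * θ) * (Real.log ((n:ℝ)+1) - Real.log ((k:ℝ)+1))) := by
    apply Real.exp_le_exp.2
    have := log_sub_le_Hsum_sub hkn
    have hmul : lam * θ * (Real.log ((n:ℝ)+1) - Real.log ((k:ℝ)+1)) ≤
        lam * θ * (Hsum n - Hsum k) := by
      apply mul_le_mul_of_nonneg_left this (by positivity)
    rw [tpartial_eq, tpartial_eq]
    nlinarith
  have h2 : Real.exp (-(lam * θ) * (Real.log ((n:ℝ)+1) - Real.log ((k:ℝ)+1))) =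
      (((k:ℝ)+1) / ((n:ℝ)+1)) ^ (lam * θ) := by
    rw [Real.rpow_def_of_pos (by positivity), Real.log_div (by positivity) (by positivity)]
    ring_nf
  have h3 : (((k:ℝ)+1) / ((n:ℝ)+1)) ^ (lam * θ) ≤ (2 * ((k:ℝ) / n)) ^ (lam * θ) := by
    apply Real.rpow_le_rpow (by positivity) _ (by positivity)
    rw [mul_div_assoc']
    rw [div_le_div_iff₀ (by positivity) hn0]
    have hk1 : (1:ℝ) ≤ (k:ℝ) := by exact_mod_cast hk
    nlinarith [mul_le_mul_of_nonneg_right hk1 hn0.le]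
  calc Real.exp (-lam * (tpartial θ n - tpartial θ k))
      ≤ (((k:ℝ)+1) / ((n:ℝ)+1)) ^ (lam * θ) := h2 ▸ h1
    _ ≤ (2 * ((k:ℝ) / n)) ^ (lam * θ) := h3
    _ = (2 : ℝ) ^ (lam * θ) * ((k : ℝ) / n) ^ (lam * θ) := by
        rw [Real.mul_rpow (by norm_num) (by positivity)]

lemma sum_rpow_bound (a : ℝ) (ha : a + 1 ≠ 0) :
    ∃ D : ℝ, 0 < D ∧ ∀ n : ℕ, 1 ≤ n →
      ∑ k ∈ Finset.Icc 1 n, (k : ℝ) ^ a ≤ D * (n : ℝ) ^ (max (a + 1) 0) := by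
  rcases lt_or_gt_of_ne ha with hneg | hpos
  · have hsum : Summable (fun k : ℕ => (k : ℝ) ^ a) := Real.summable_nat_rpow.2 (by linarith)
    refine ⟨max (∑' k : ℕ, (k : ℝ) ^ a) 1, lt_of_lt_of_le one_pos (le_max_right _ _),
      fun n hn => ?_⟩
    have hmax : max (a + 1) 0 = 0 := max_eq_right (by linarith)
    rw [hmax, Real.rpow_zero, mul_one]
    calc ∑ k ∈ Finset.Icc 1 n, (k : ℝ) ^ a ≤ ∑' k : ℕ, (k : ℝ) ^ a :=
          Summable.sum_le_tsum _ (fun i _ => Real.rpow_nonneg (Nat.cast_nonneg i) a) hsum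
      _ ≤ _ := le_max_left _ _
  · have hmax : max (a + 1) 0 = a + 1 := max_eq_left (by linarith)
    rcases le_or_gt 0 a with h0 | h0
    · refine ⟨1, one_pos, fun n hn => ?_⟩
      rw [hmax, one_mul]
      have hn0 : (0:ℝ) < n := by exact_mod_cast hn
      calc ∑ k ∈ Finset.Icc 1 n, (k : ℝ) ^ a ≤ ∑ _k ∈ Finset.Icc 1 n, (n : ℝ) ^ a := by
            apply Finset.sum_le_sum
            intro k hk
            rcases Finset.mem_Icc.1 hk with ⟨_, h2⟩
            exact Real.rpow_le_rpow (Nat.cast_nonneg k) (by exact_mod_cast h2) h0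
        _ = (n:ℝ) * (n:ℝ) ^ a := by
            rw [Finset.sum_const, Nat.card_Icc, nsmul_eq_mul]
            norm_num
        _ = (n:ℝ) ^ (a + 1) := by
            rw [add_comm, Real.rpow_add hn0, Real.rpow_one]
    · refine ⟨1 + 1 / (a + 1), by positivity, fun n hn => ?_⟩
      rw [hmax]
      have hn0 : (0:ℝ) < n := by exact_mod_cast hn
      have hsplit : Finset.Icc 1 n = insert 1 (Finset.Icc 2 n) := by
        ext x; simp only [Finset.mem_Icc, Finset.mem_insert]; omega
      have h1notin : (1:ℕ) ∉ Finset.Icc 2 n := by simp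
      rw [hsplit, Finset.sum_insert h1notin]
      have hN1 : (1:ℝ) ≤ (n:ℝ) ^ (a + 1) :=
        Real.one_le_rpow (by exact_mod_cast hn) (by linarith)
      have htail : ∑ k ∈ Finset.Icc 2 n, (k:ℝ) ^ a ≤ (n:ℝ) ^ (a + 1) / (a + 1) := by
        have hanti : AntitoneOn (fun x : ℝ => x ^ a) (Set.Icc ((1:ℕ):ℝ) ((n:ℕ):ℝ)) := by
          intro x hx y _ hxy
          have hx1 : (1:ℝ) ≤ x := by
            have := hx.1; rwa [Nat.cast_one] at this
          exact Real.rpow_le_rpow_of_nonpos (lt_of_lt_of_le one_pos hx1) hxy h0.le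
        have hle := AntitoneOn.sum_le_integral_Ico hn hanti
        have hre : ∑ k ∈ Finset.Icc 2 n, (k:ℝ) ^ a
            = ∑ i ∈ Finset.Ico 1 n, (((i + 1 : ℕ)) : ℝ) ^ a := by
          rw [Finset.sum_Ico_add' (fun x : ℕ => ((x:ℕ):ℝ) ^ a) 1 n 1, Finset.Ico_add_one_right_eq_Icc]
        have hint : (∫ x in ((1:ℕ):ℝ)..((n:ℕ):ℝ), x ^ a)
            = ((n:ℝ) ^ (a+1) - 1) / (a + 1) := by
          rw [integral_rpow (Or.inl (by linarith : (-1:ℝ) < a))]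
          norm_num
        rw [hre]
        calc ∑ i ∈ Finset.Ico 1 n, (((i + 1 : ℕ)) : ℝ) ^ a
            ≤ ∫ x in ((1:ℕ):ℝ)..((n:ℕ):ℝ), x ^ a := hle
          _ = ((n:ℝ) ^ (a+1) - 1) / (a + 1) := hint
          _ ≤ (n:ℝ) ^ (a + 1) / (a + 1) := by
              apply div_le_div_of_nonneg_right ?_ (by linarith)
              · linarith
      have : ((1:ℕ):ℝ) ^ a = 1 := by rw [Nat.cast_one, Real.one_rpow]
      rw [this]
      have hrec : (0:ℝ) < 1 / (a+1) := by positivity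
      calc 1 + ∑ k ∈ Finset.Icc 2 n, (k:ℝ) ^ a ≤ 1 + (n:ℝ) ^ (a+1) / (a+1) := by linarith
        _ ≤ (1 + 1/(a+1)) * (n:ℝ) ^ (a+1) := by
            have hE : (1 + 1/(a+1)) * (n:ℝ)^(a+1) = (n:ℝ)^(a+1) + (n:ℝ)^(a+1)/(a+1) := by
              ring
            rw [hE]; linarith

theorem weighted_exponential_sum_bound (θ lam β : ℝ) (hθ : 0 < θ)
    (hlam : 0 < lam) (hβ : 0 < β) (hne : lam * θ ≠ β) :
    ∃ C : ℝ, 0 < C ∧ ∀ n : ℕ, 1 ≤ n →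
      ∑ k ∈ Finset.Icc 1 n,
          (θ / k) ^ (1 + β) * Real.exp (-lam * (tpartial θ n - tpartial θ k))
        ≤ C * (n : ℝ) ^ (-(min (lam * θ) β)) := by
  set a : ℝ := lam * θ - (1 + β) with ha_def
  have ha : a + 1 ≠ 0 := by
    intro h; apply hne; rw [ha_def] at h; linarith
  obtain ⟨D, hD, hDb⟩ := sum_rpow_bound a ha
  refine ⟨θ ^ (1 + β) * 2 ^ (lam * θ) * D, by positivity, fun n hn => ?_⟩
  have hn0 : (0:ℝ) < n := by exact_mod_cast hn
  have hterm : ∀ k ∈ Finset.Icc 1 n,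
      (θ / k) ^ (1 + β) * Real.exp (-lam * (tpartial θ n - tpartial θ k)) ≤
      θ ^ (1+β) * 2 ^ (lam*θ) * (n:ℝ) ^ (-(lam*θ)) * (k:ℝ) ^ a := by
    intro k hk
    rcases Finset.mem_Icc.1 hk with ⟨hk1, hkn⟩
    have hk0 : (0:ℝ) < k := by exact_mod_cast hk1
    have h1 : (θ / (k:ℝ)) ^ (1+β) = θ^(1+β) / (k:ℝ)^(1+β) :=
      Real.div_rpow hθ.le (Nat.cast_nonneg k) _
    have h2 := exp_bound θ lam hθ hlam hk1 hkn
    have hbase : (0:ℝ) ≤ (θ/(k:ℝ))^(1+β) := Real.rpow_nonneg (by positivity) _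
    calc (θ / k) ^ (1 + β) * Real.exp (-lam * (tpartial θ n - tpartial θ k))
        ≤ (θ / k) ^ (1 + β) * (2 ^ (lam*θ) * ((k:ℝ)/n) ^ (lam*θ)) :=
          mul_le_mul_of_nonneg_left h2 hbase
      _ = θ^(1+β) * 2^(lam*θ) * (n:ℝ)^(-(lam*θ)) * (k:ℝ)^a := by
          have e1 : ((k:ℝ)/n)^(lam*θ) = (k:ℝ)^(lam*θ)/(n:ℝ)^(lam*θ) :=
            Real.div_rpow (Nat.cast_nonneg k) hn0.le _
          have e2 : (k:ℝ)^a = (k:ℝ)^(lam*θ)/(k:ℝ)^(1+β) := by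
            rw [ha_def, Real.rpow_sub hk0]
          have e3 : (n:ℝ)^(-(lam*θ)) = ((n:ℝ)^(lam*θ))⁻¹ := Real.rpow_neg hn0.le _
          have p1 : (0:ℝ) < (k:ℝ)^(1+β) := Real.rpow_pos_of_pos hk0 _
          have p2 : (0:ℝ) < (n:ℝ)^(lam*θ) := Real.rpow_pos_of_pos hn0 _
          rw [h1, e1, e2, e3]
          field_simp
  calc ∑ k ∈ Finset.Icc 1 n,
          (θ / k) ^ (1 + β) * Real.exp (-lam * (tpartial θ n - tpartial θ k))
      ≤ ∑ k ∈ Finset.Icc 1 n, θ^(1+β)*2^(lam*θ)*(n:ℝ)^(-(lam*θ)) * (k:ℝ)^a :=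
        Finset.sum_le_sum hterm
    _ = θ^(1+β)*2^(lam*θ)*(n:ℝ)^(-(lam*θ)) * ∑ k ∈ Finset.Icc 1 n, (k:ℝ)^a := by
        rw [Finset.mul_sum]
    _ ≤ θ^(1+β)*2^(lam*θ)*(n:ℝ)^(-(lam*θ)) * (D * (n:ℝ)^(max (a+1) 0)) := by
        apply mul_le_mul_of_nonneg_left (hDb n hn) (by positivity)
    _ = θ^(1+β)*2^(lam*θ)*D * ((n:ℝ)^(-(lam*θ)) * (n:ℝ)^(max (a+1) 0)) := by ring
    _ = θ ^ (1 + β) * 2 ^ (lam * θ) * D * (n:ℝ)^(-(min (lam*θ) β)) := by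
        rw [← Real.rpow_add hn0]
        congr 1
        have hA : a + 1 = lam*θ - β := by rw [ha_def]; ring
        rw [hA]
        rcases lt_or_gt_of_ne hne with h | h
        · rw [max_eq_right (by linarith), min_eq_left h.le]; ring
        · rw [max_eq_left (by linarith), min_eq_right h.le]; ring
end
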